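/- For integers r ≥ 1, n ≥ 2r, and every 0 ≤ t ≤ C(n, r), there exists 0 ≤ i ≤ C(2r, r) such that b(t) = M(i), where b(t) is the maximum of |B(F)| over all F ⊆ C([n], r) with |F| = t. -/

import Mathlib

/-- The ground set `[n] = {1, …, n}` as a finset of naturals. -/
def ground (n : ℕ) : Finset ℕ := Finset.Icc 1 n

/-- The nested condition `j ∈ e σ₁ (j+1 ∈ e σ₂ (⋯))` determined by a sequence `σ`
over `{∧, ∨}` (where `false` encodes `∧` and `true` encodes `∨`). -/
def setCond (e : Finset ℕ) : ℕ → List Bool → Bool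
  | j, [] => decide (j ∈ e)
  | j, false :: s => decide (j ∈ e) && setCond e (j + 1) s
  | j, true :: s => decide (j ∈ e) || setCond e (j + 1) s

/-- `Θ_r = Υ_r ∪ {α, ω}` (elements of `Υ_r` are sequences over `{∧, ∨}`, with
`false` encoding `∧` and `true` encoding `∨`). -/
inductive Theta where
  | alpha : Theta
  | seq (σ : List Bool) : Theta
  | omega : Theta

/-- Membership in `Θ_r`: a sequence must contain fewer than `r` symbols `∧`
and fewer than `r` symbols `∨`. -/
def Theta.valid (r : ℕ) : Theta → Prop
  | .seq σ => σ.count false < r ∧ σ.count true < r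
  | _ => True

/-- `T_r(σ)` for `σ ∈ Θ_r`: the `r`-subsets of `[n]` satisfying the nested condition
given by `σ`; `T_r(α) = ∅` and `T_r(ω) = the family of all r-subsets of [n]`. -/
def Theta.Tset (n r : ℕ) : Theta → Finset (Finset ℕ)
  | .alpha => ∅
  | .seq σ => (Finset.powersetCard r (ground n)).filter (fun e => setCond e 1 σ = true)
  | .omega => Finset.powersetCard r (ground n)

/-- Encode the symbols for the lexicographic comparison: `∧ ↦ 0`, `* ↦ 1`, `∨ ↦ 2`. -/
def symCode (b : Bool) : ℕ := if b then 2 else 0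

/-- The order on `Θ_r`: `α` is minimal, `ω` is maximal, and sequences are compared
lexicographically after appending `*`, with `∧ < * < ∨`. -/
def Theta.lt : Theta → Theta → Prop
  | _, .alpha => False
  | .alpha, _ => True
  | .omega, _ => False
  | _, .omega => True
  | .seq σ, .seq τ => List.Lex (· < ·) (σ.map symCode ++ [1]) (τ.map symCode ++ [1])

/-- The position of an element of `Θ_r` in the linear order on `Θ_r`
(the number of elements of `Θ_r` strictly below it; `α` has position `0`). -/
noncomputable def Theta.posOf (r : ℕ) (t : Theta) : ℕ :=
  Set.ncard {x : Theta | x.valid r ∧ x.lt t}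

/-- The blocker `B(F)`: the `r`-subsets of `[n]` meeting every member of `F`. -/
def blockerT (n r : ℕ) (F : Finset (Finset ℕ)) : Finset (Finset ℕ) :=
  (Finset.powersetCard r (ground n)).filter (fun e => ∀ f ∈ F, (e ∩ f).Nonempty)

/-- `σ̄`: interchange `∧` and `∨`; `ᾱ = ω` and `ω̄ = α`. -/
def Theta.bar : Theta → Theta
  | .alpha => .omega
  | .seq σ => .seq (σ.map not)
  | .omega => .alpha


open Finset List

/-- positions of `∧` symbols -/
def andP : ℕ → List Bool → Finset ℕ
  | _, [] => ∅
  | j, false :: s => insert j (andP (j+1) s)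
  | j, true :: s => andP (j+1) s

/-- positions of `∨` symbols -/
def orP : ℕ → List Bool → Finset ℕ
  | _, [] => ∅
  | j, true :: s => insert j (orP (j+1) s)
  | j, false :: s => orP (j+1) s

lemma mem_andP {i j : ℕ} : ∀ {σ : List Bool}, i ∈ andP j σ → j ≤ i ∧ i < j + σ.length := by
  intro σ
  induction σ generalizing j with
  | nil => simp [andP]
  | cons b s ih =>
    cases b with
    | false =>
      intro h
      simp only [andP, mem_insert] at h
      rcases h with h | h
      · simp [h]
      · have := ih h; simp only [length_cons]; omega
    | true =>
      intro h
      have := ih h; simp only [length_cons]; omega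

lemma mem_orP {i j : ℕ} : ∀ {σ : List Bool}, i ∈ orP j σ → j ≤ i ∧ i < j + σ.length := by
  intro σ
  induction σ generalizing j with
  | nil => simp [orP]
  | cons b s ih =>
    cases b with
    | true =>
      intro h
      simp only [orP, mem_insert] at h
      rcases h with h | h
      · simp [h]
      · have := ih h; simp only [length_cons]; omega
    | false =>
      intro h
      have := ih h; simp only [length_cons]; omega

lemma andP_map_not (j : ℕ) : ∀ (σ : List Bool), andP j (σ.map not) = orP j σ := by
  intro σ
  induction σ generalizing j with
  | nil => simp [andP, orP]
  | cons b s ih => cases b <;> simp [andP, orP, ih]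

lemma orP_map_not (j : ℕ) : ∀ (σ : List Bool), orP j (σ.map not) = andP j σ := by
  intro σ
  induction σ generalizing j with
  | nil => simp [andP, orP]
  | cons b s ih => cases b <;> simp [andP, orP, ih]

lemma card_andP (j : ℕ) : ∀ (σ : List Bool), (andP j σ).card = σ.count false := by
  intro σ
  induction σ generalizing j with
  | nil => simp [andP]
  | cons b s ih =>
    cases b with
    | false =>
      have hni : j ∉ andP (j+1) s := fun h => by have := mem_andP h; omega
      simp [andP, Finset.card_insert_of_notMem hni, ih, List.count_cons]
    | true => simp [andP, ih, List.count_cons]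

lemma card_orP (j : ℕ) : ∀ (σ : List Bool), (orP j σ).card = σ.count true := by
  intro σ
  induction σ generalizing j with
  | nil => simp [orP]
  | cons b s ih =>
    cases b with
    | true =>
      have hni : j ∉ orP (j+1) s := fun h => by have := mem_orP h; omega
      simp [orP, Finset.card_insert_of_notMem hni, ih, List.count_cons]
    | false => simp [orP, ih, List.count_cons]

lemma andP_append (j : ℕ) : ∀ (σ s' : List Bool),
    andP j (σ ++ s') = andP j σ ∪ andP (j + σ.length) s' := by
  intro σ
  induction σ generalizing j with
  | nil => simp [andP]
  | cons b s ih =>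
    intro s'
    cases b with
    | false =>
      have h : j + 1 + s.length = j + (s.length + 1) := by omega
      simp only [List.cons_append, andP, length_cons]
      rw [ih, h, Finset.insert_union]
    | true =>
      have h : j + 1 + s.length = j + (s.length + 1) := by omega
      simp only [List.cons_append, andP, length_cons]
      rw [ih, h]

lemma orP_append (j : ℕ) : ∀ (σ s' : List Bool),
    orP j (σ ++ s') = orP j σ ∪ orP (j + σ.length) s' := by
  intro σ
  induction σ generalizing j with
  | nil => simp [orP]
  | cons b s ih =>
    intro s'
    cases b with
    | true =>
      have h : j + 1 + s.length = j + (s.length + 1) := by omega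
      simp only [List.cons_append, orP, length_cons]
      rw [ih, h, Finset.insert_union]
    | false =>
      have h : j + 1 + s.length = j + (s.length + 1) := by omega
      simp only [List.cons_append, orP, length_cons]
      rw [ih, h]

lemma andP_replicate_true (j p : ℕ) : andP j (List.replicate p true) = ∅ := by
  induction p generalizing j with
  | zero => simp [andP]
  | succ p ih => simp [List.replicate_succ, andP, ih]

lemma orP_replicate_false (j p : ℕ) : orP j (List.replicate p false) = ∅ := by
  induction p generalizing j with
  | zero => simp [orP]
  | succ p ih => simp [List.replicate_succ, orP, ih]

lemma orP_replicate_true (j p : ℕ) : orP j (List.replicate p true) = Finset.Ico j (j + p) := by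
  induction p generalizing j with
  | zero => simp [orP]
  | succ p ih =>
    simp only [List.replicate_succ, orP, ih]
    ext x
    simp only [mem_insert, mem_Ico]
    omega

lemma andP_replicate_false (j p : ℕ) : andP j (List.replicate p false) = Finset.Ico j (j + p) := by
  induction p generalizing j with
  | zero => simp [andP]
  | succ p ih =>
    simp only [List.replicate_succ, andP, ih]
    ext x
    simp only [mem_insert, mem_Ico]
    omega

lemma disjoint_andP_orP (j : ℕ) : ∀ (σ : List Bool), Disjoint (andP j σ) (orP j σ) := by
  intro σ
  induction σ generalizing j with
  | nil => simp [andP, orP]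
  | cons b s ih =>
    cases b with
    | false =>
      simp only [andP, orP]
      rw [Finset.disjoint_insert_left]
      exact ⟨fun h => by have := mem_orP h; omega, ih _⟩
    | true =>
      simp only [andP, orP]
      rw [Finset.disjoint_insert_right]
      exact ⟨fun h => by have := mem_andP h; omega, ih _⟩

lemma pos_cover {i j : ℕ} : ∀ {σ : List Bool}, j ≤ i → i < j + σ.length →
    i ∈ andP j σ ∨ i ∈ orP j σ := by
  intro σ
  induction σ generalizing j with
  | nil => intro h1 h2; simp at h2; omega
  | cons b s ih =>
    intro h1 h2
    rcases Nat.eq_or_lt_of_le h1 with rfl | hlt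
    · cases b <;> simp [andP, orP]
    · have : j + 1 ≤ i := hlt
      have h2' : i < j + 1 + s.length := by simp at h2; omega
      rcases ih this h2' with h | h
      · cases b <;> simp [andP, orP, h]
      · cases b <;> simp [andP, orP, h]

/-- Characterization of satisfaction: there is a "success point". -/
lemma setCond_true_iff (g : Finset ℕ) : ∀ (σ : List Bool) (j : ℕ),
    setCond g j σ = true ↔
      ∃ i, (i ∈ orP j σ ∨ i = j + σ.length) ∧ i ∈ g ∧
        ∀ i' ∈ andP j σ, i' < i → i' ∈ g := by
  intro σ
  induction σ with
  | nil =>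
    intro j
    simp [setCond, andP, orP]
  | cons b s ih =>
    intro j
    cases b with
    | false =>
      simp only [setCond, Bool.and_eq_true, decide_eq_true_eq, ih (j+1), andP, orP, length_cons]
      constructor
      · rintro ⟨hj, i, hi, hig, hcond⟩
        refine ⟨i, ?_, hig, ?_⟩
        · rcases hi with h | h
          · exact Or.inl h
          · exact Or.inr (by omega)
        intro i' hi' hlt
        rcases Finset.mem_insert.1 hi' with rfl | hi''
        · exact hj
        · exact hcond i' hi'' hlt
      · rintro ⟨i, hi, hig, hcond⟩
        have hji : j < i := by
          rcases hi with h | h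
          · have := mem_orP h; omega
          · omega
        refine ⟨hcond j (Finset.mem_insert_self _ _) hji, i, ?_, hig, ?_⟩
        · rcases hi with h | h
          · exact Or.inl h
          · exact Or.inr (by omega)
        · intro i' hi' hlt
          exact hcond i' (Finset.mem_insert_of_mem hi') hlt
    | true =>
      simp only [setCond, Bool.or_eq_true, decide_eq_true_eq, ih (j+1), andP, orP, length_cons]
      constructor
      · rintro (hj | ⟨i, hi, hig, hcond⟩)
        · refine ⟨j, Or.inl (Finset.mem_insert_self _ _), hj, ?_⟩
          intro i' hi' hlt
          have := mem_andP hi'; omega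
        · refine ⟨i, ?_, hig, fun i' hi' hlt => hcond i' hi' hlt⟩
          rcases hi with h | h
          · left; exact Finset.mem_insert_of_mem h
          · right; omega
      · rintro ⟨i, hi, hig, hcond⟩
        rcases hi with h | h
        · rcases Finset.mem_insert.1 h with rfl | h'
          · exact Or.inl hig
          · exact Or.inr ⟨i, Or.inl h', hig, hcond⟩
        · exact Or.inr ⟨i, Or.inr (by omega), hig, hcond⟩

/-- Characterization of failure: there is a "failure point". -/
lemma setCond_false_iff (g : Finset ℕ) : ∀ (σ : List Bool) (j : ℕ),
    setCond g j σ = false ↔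
      ∃ i, (i ∈ andP j σ ∨ i = j + σ.length) ∧ i ∉ g ∧
        ∀ i' ∈ orP j σ, i' < i → i' ∉ g := by
  intro σ
  induction σ with
  | nil =>
    intro j
    simp [setCond, andP, orP]
  | cons b s ih =>
    intro j
    cases b with
    | true =>
      simp only [setCond, Bool.or_eq_false_iff, decide_eq_false_iff_not, ih (j+1), andP, orP,
        length_cons]
      constructor
      · rintro ⟨hj, i, hi, hig, hcond⟩
        refine ⟨i, ?_, hig, ?_⟩
        · rcases hi with h | h
          · exact Or.inl h
          · exact Or.inr (by omega)
        intro i' hi' hlt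
        rcases Finset.mem_insert.1 hi' with rfl | hi''
        · exact hj
        · exact hcond i' hi'' hlt
      · rintro ⟨i, hi, hig, hcond⟩
        have hji : j < i := by
          rcases hi with h | h
          · have := mem_andP h; omega
          · omega
        refine ⟨hcond j (Finset.mem_insert_self _ _) hji, i, ?_, hig, ?_⟩
        · rcases hi with h | h
          · exact Or.inl h
          · exact Or.inr (by omega)
        · intro i' hi' hlt
          exact hcond i' (Finset.mem_insert_of_mem hi') hlt
    | false =>
      simp only [setCond, Bool.and_eq_false_iff, decide_eq_false_iff_not, ih (j+1), andP, orP,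
        length_cons]
      constructor
      · rintro (hj | ⟨i, hi, hig, hcond⟩)
        · refine ⟨j, Or.inl (Finset.mem_insert_self _ _), hj, ?_⟩
          intro i' hi' hlt
          have := mem_orP hi'; omega
        · refine ⟨i, ?_, hig, fun i' hi' hlt => hcond i' hi' hlt⟩
          rcases hi with h | h
          · left; exact Finset.mem_insert_of_mem h
          · right; omega
      · rintro ⟨i, hi, hig, hcond⟩
        rcases hi with h | h
        · rcases Finset.mem_insert.1 h with rfl | h'
          · exact Or.inl hig
          · exact Or.inr ⟨i, Or.inl h', hig, hcond⟩
        · exact Or.inr ⟨i, Or.inr (by omega), hig, hcond⟩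

lemma setCond_mono {g g' : Finset ℕ} (hsub : g ⊆ g') {σ : List Bool} {j : ℕ}
    (h : setCond g j σ = true) : setCond g' j σ = true := by
  rw [setCond_true_iff] at h ⊢
  obtain ⟨i, hi, hig, hcond⟩ := h
  exact ⟨i, hi, hsub hig, fun i' h1 h2 => hsub (hcond i' h1 h2)⟩

/-- cross-intersection of `T(σ)` and `T(σ̄)`. -/
lemma setCond_cross {f g : Finset ℕ} {σ : List Bool} {j : ℕ}
    (hf : setCond f j σ = true) (hg : setCond g j (σ.map not) = true) :
    ∃ x, x ∈ f ∧ x ∈ g := by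
  rw [setCond_true_iff] at hf hg
  obtain ⟨i, hi, hif, hcondf⟩ := hf
  obtain ⟨i2, hi2, hig, hcondg⟩ := hg
  rw [orP_map_not] at hi2
  rw [andP_map_not] at hcondg
  rw [List.length_map] at hi2
  rcases lt_trichotomy i i2 with h | h | h
  · have hio : i ∈ orP j σ := by
      rcases hi with h' | h'
      · exact h'
      · exfalso
        rcases hi2 with h'' | h''
        · have := mem_andP h''; omega
        · omega
    exact ⟨i, hif, hcondg i hio h⟩
  · exact ⟨i, hif, h ▸ hig⟩
  · have hio : i2 ∈ andP j σ := by
      rcases hi2 with h' | h'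
      · exact h'
      · exfalso
        rcases hi with h'' | h''
        · have := mem_orP h''; omega
        · omega
    exact ⟨i2, hcondf i2 hio h, hig⟩

/-- appending `true :: s` weakens the condition. -/
lemma setCond_append_true {g : Finset ℕ} {σ s : List Bool} {j : ℕ}
    (h : setCond g j σ = true) : setCond g j (σ ++ true :: s) = true := by
  rw [setCond_true_iff] at h ⊢
  obtain ⟨i, hi, hig, hcond⟩ := h
  have hile : i ≤ j + σ.length := by
    rcases hi with h' | h'
    · have := mem_orP h'; omega
    · omega
  refine ⟨i, ?_, hig, ?_⟩
  · left
    rw [orP_append]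
    rcases hi with h' | h'
    · exact Finset.mem_union_left _ h'
    · exact Finset.mem_union_right _ (by simp [orP, h'])
  · intro i' hi' hlt
    rw [andP_append] at hi'
    rcases Finset.mem_union.1 hi' with h' | h'
    · exact hcond i' h' hlt
    · exfalso
      simp only [andP] at h'
      have := mem_andP h'
      omega

/-- dropping `false :: s` from the end weakens the condition. -/
lemma setCond_drop_false {g : Finset ℕ} {σ s : List Bool} {j : ℕ}
    (h : setCond g j (σ ++ false :: s) = true) : setCond g j σ = true := by
  rw [setCond_true_iff] at h ⊢
  obtain ⟨i, hi, hig, hcond⟩ := h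
  rw [orP_append] at hi
  rw [andP_append] at hcond
  simp only [Finset.mem_union] at hi
  rcases hi with (h' | h') | h'
  · exact ⟨i, Or.inl h', hig, fun i' h1 h2 => hcond i' (Finset.mem_union_left _ h1) h2⟩
  · -- success point in the appended part: all of `andP σ` and the last atom of σ are in g
    simp only [orP] at h'
    have hge : j + σ.length + 1 ≤ i := (mem_orP h').1
    refine ⟨j + σ.length, Or.inr rfl, ?_, ?_⟩
    · exact hcond _ (Finset.mem_union_right _ (by simp [andP])) (by omega)
    · intro i' h1 h2
      exact hcond i' (Finset.mem_union_left _ h1) (by omega)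
  · have hge : j + σ.length + 1 ≤ i := by
      simp only [List.length_append, List.length_cons] at h'
      omega
    refine ⟨j + σ.length, Or.inr rfl, ?_, ?_⟩
    · exact hcond _ (Finset.mem_union_right _ (by simp [andP])) (by omega)
    · intro i' h1 h2
      exact hcond i' (Finset.mem_union_left _ h1) (by omega)

/-! ### infrastructure -/

/-- the (strict) lexicographic order on finsets of naturals used for initial segments -/
def lexLt (e f : Finset ℕ) : Prop := ∃ d, d ∈ e ∧ d ∉ f ∧ ∀ c ∈ f, c ∉ e → d < c

lemma card_ground (n : ℕ) : (ground n).card = n := by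
  simp [ground]

lemma mem_ground {n x : ℕ} : x ∈ ground n ↔ 1 ≤ x ∧ x ≤ n := by
  simp [ground]

lemma mem_ps {n r : ℕ} {e : Finset ℕ} :
    e ∈ Finset.powersetCard r (ground n) ↔ e ⊆ ground n ∧ e.card = r :=
  Finset.mem_powersetCard

/-- padding a partial set into a full `r`-set avoiding `g` -/
lemma pad_exists {n r : ℕ} (hn : 2 * r ≤ n) {g core : Finset ℕ}
    (hg : g ∈ Finset.powersetCard r (ground n)) (hcore : core ⊆ ground n)
    (hdisj : ∀ x ∈ core, x ∉ g) (hcard : core.card ≤ r) :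
    ∃ f ∈ Finset.powersetCard r (ground n), core ⊆ f ∧ ∀ x ∈ f, x ∉ g := by
  obtain ⟨hgsub, hgcard⟩ := mem_ps.1 hg
  have hsub : core ⊆ ground n \ g := fun x hx =>
    Finset.mem_sdiff.2 ⟨hcore hx, hdisj x hx⟩
  have hcard2 : r ≤ (ground n \ g).card := by
    rw [Finset.card_sdiff_of_subset hgsub, card_ground, hgcard]; omega
  obtain ⟨f, hf1, hf2, hf3⟩ := Finset.exists_subsuperset_card_eq hsub hcard hcard2
  refine ⟨f, mem_ps.2 ⟨fun x hx => (Finset.mem_sdiff.1 (hf2 hx)).1, hf3⟩, hf1, ?_⟩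
  exact fun x hx => (Finset.mem_sdiff.1 (hf2 hx)).2

lemma SATintro {f : Finset ℕ} {σ : List Bool} {i : ℕ}
    (h1 : i ∈ orP 1 σ ∨ i = 1 + σ.length) (h2 : i ∈ f)
    (h3 : ∀ i' ∈ andP 1 σ, i' < i → i' ∈ f) : setCond f 1 σ = true :=
  (setCond_true_iff f σ 1).2 ⟨i, h1, h2, h3⟩

lemma mem_Tset_seq {n r : ℕ} {e : Finset ℕ} {l : List Bool} :
    e ∈ Theta.Tset n r (.seq l) ↔
      e ∈ Finset.powersetCard r (ground n) ∧ setCond e 1 l = true :=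
  Finset.mem_filter

lemma Tset_subset_ps (n r : ℕ) : ∀ θ : Theta,
    Theta.Tset n r θ ⊆ Finset.powersetCard r (ground n)
  | .alpha => Finset.empty_subset _
  | .seq _ => Finset.filter_subset _ _
  | .omega => Finset.Subset.refl _

lemma count_map_not_false (σ : List Bool) : (σ.map not).count false = σ.count true := by
  induction σ with
  | nil => simp
  | cons b s ih => cases b <;> simp [List.count_cons, ih]

lemma count_map_not_true (σ : List Bool) : (σ.map not).count true = σ.count false := by
  induction σ with
  | nil => simp
  | cons b s ih => cases b <;> simp [List.count_cons, ih]

lemma valid_bar {r : ℕ} {θ : Theta} (h : θ.valid r) : θ.bar.valid r := by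
  cases θ with
  | alpha => trivial
  | omega => trivial
  | seq σ =>
    obtain ⟨h1, h2⟩ := h
    show (σ.map not).count false < r ∧ (σ.map not).count true < r
    rw [count_map_not_false, count_map_not_true]
    exact ⟨h2, h1⟩

lemma count_add_count (σ : List Bool) : σ.count false + σ.count true = σ.length := by
  induction σ with
  | nil => simp
  | cons b s ih =>
    cases b <;> simp [List.count_cons] <;> omega

/-- cross-intersection at the level of `Theta` -/
lemma crossTheta {n r : ℕ} (θ : Theta) {f g : Finset ℕ}
    (hf : f ∈ θ.Tset n r) (hg : g ∈ θ.bar.Tset n r) : (f ∩ g).Nonempty := by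
  cases θ with
  | alpha => exact absurd hf (Finset.notMem_empty _)
  | omega => exact absurd hg (Finset.notMem_empty _)
  | seq σ =>
    obtain ⟨-, hf2⟩ := mem_Tset_seq.1 hf
    obtain ⟨-, hg2⟩ := mem_Tset_seq.1 hg
    obtain ⟨x, hx1, hx2⟩ := setCond_cross hf2 hg2
    exact ⟨x, Finset.mem_inter.2 ⟨hx1, hx2⟩⟩

/-- lex-downward closure of `T(σ)` (within r-subsets of the ground set) -/
lemma lexDown_setCond {σ : List Bool} {f e' : Finset ℕ} (he' : e' ⊆ ground n)
    (hf : setCond f 1 σ = true) (h : lexLt e' f) : setCond e' 1 σ = true := by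
  obtain ⟨i, hi, hif, hcond⟩ := (setCond_true_iff f σ 1).1 hf
  obtain ⟨d, hd, hdf, hlex⟩ := h
  have hsub : ∀ c ∈ f, c < d → c ∈ e' := by
    intro c hc hcd
    by_contra hce
    exact absurd hcd (not_lt.2 (le_of_lt (hlex c hc hce)))
  rcases lt_or_ge i d with hid | hdi
  · exact SATintro hi (hsub i hif hid) (fun i' h1 h2 => hsub i' (hcond i' h1 h2) (by omega))
  · have hdlt : d < i := hdi.lt_of_ne (by rintro rfl; exact hdf hif)
    have hdA : d ∉ andP 1 σ := fun hh => hdf (hcond d hh hdlt)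
    have hd1 : 1 ≤ d := (mem_ground.1 (he' hd)).1
    have hdlen : d < 1 + σ.length := by
      rcases hi with h' | h'
      · have := mem_orP h'; omega
      · omega
    have hdor : d ∈ orP 1 σ := by
      rcases pos_cover hd1 hdlen with h' | h'
      · exact absurd h' hdA
      · exact h'
    exact SATintro (Or.inl hdor) hd
      (fun i' h1 h2 => hsub i' (hcond i' h1 (by omega)) (by omega))

/-- `σ` is a good successor of `τ`: carries all data needed in the main argument. -/
def Good (n r : ℕ) (τ σ : Theta) : Prop :=
  σ.valid r ∧ Theta.Tset n r τ ⊆ Theta.Tset n r σ ∧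
  ∃ f₀, f₀ ∈ Theta.Tset n r σ ∧ f₀ ∉ Theta.Tset n r τ ∧
    (∀ g ∈ Finset.powersetCard r (ground n), g ∉ Theta.Tset n r σ.bar →
      ∃ f ∈ insert f₀ (Theta.Tset n r τ), ∀ x ∈ f, x ∉ g) ∧
    (∀ f ∈ insert f₀ (Theta.Tset n r τ), ∀ e' ∈ Finset.powersetCard r (ground n),
      lexLt e' f → e' ∈ insert f₀ (Theta.Tset n r τ))

lemma eq_of_subset_ps {n r : ℕ} {f₀ e : Finset ℕ} (he : e ∈ Finset.powersetCard r (ground n))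
    (hc : f₀.card = r) (hsub : f₀ ⊆ e) : e = f₀ :=
  (Finset.eq_of_subset_of_card_le hsub (by rw [(mem_ps.1 he).2, hc])).symm

lemma card_Icc_nat (a b : ℕ) : (Finset.Icc a b).card = b + 1 - a := Nat.card_Icc a b


lemma UNSATintro {f : Finset ℕ} {σ : List Bool} {i : ℕ}
    (h1 : i ∈ andP 1 σ ∨ i = 1 + σ.length) (h2 : i ∉ f)
    (h3 : ∀ i' ∈ orP 1 σ, i' < i → i' ∉ f) : setCond f 1 σ = false :=
  (setCond_false_iff f σ 1).2 ⟨i, h1, h2, h3⟩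

lemma not_mem_Tset_of_false {n r : ℕ} {e : Finset ℕ} {l : List Bool}
    (h : setCond e 1 l = false) : e ∉ Theta.Tset n r (.seq l) := by
  intro hc
  rw [(mem_Tset_seq.1 hc).2] at h
  exact Bool.true_eq_false.mp h

lemma setCond_false_of_not_mem {n r : ℕ} {g : Finset ℕ} {l : List Bool}
    (hg : g ∈ Finset.powersetCard r (ground n)) (h : g ∉ Theta.Tset n r (.seq l)) :
    setCond g 1 l = false := by
  cases h' : setCond g 1 l
  · rfl
  · exact absurd (mem_Tset_seq.2 ⟨hg, h'⟩) h

/-- Case (a) : `α → [∧]^(r-1)` -/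
lemma step_alpha {n r : ℕ} (hr : 1 ≤ r) (hn : 2 * r ≤ n) :
    Good n r .alpha (.seq (List.replicate (r-1) false)) := by
  set l : List Bool := List.replicate (r-1) false with hl
  have hlen : l.length = r - 1 := List.length_replicate
  have handP : andP 1 l = Finset.Ico 1 r := by
    rw [hl, andP_replicate_false]; congr 1; omega
  have horP : orP 1 l = ∅ := orP_replicate_false _ _
  set f₀ : Finset ℕ := Finset.Icc 1 r with hf₀
  have hf₀g : f₀ ⊆ ground n := by
    intro x hx; rw [Finset.mem_Icc] at hx; exact mem_ground.2 ⟨hx.1, by omega⟩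
  have hf₀c : f₀.card = r := by rw [hf₀, card_Icc_nat]; omega
  have hf₀ps : f₀ ∈ Finset.powersetCard r (ground n) := mem_ps.2 ⟨hf₀g, hf₀c⟩
  have hf₀T : f₀ ∈ Theta.Tset n r (.seq l) := by
    refine mem_Tset_seq.2 ⟨hf₀ps, SATintro (i := r) (Or.inr (by rw [hlen]; omega)) ?_ ?_⟩
    · rw [hf₀, Finset.mem_Icc]; omega
    · intro i' h1 _
      rw [handP, Finset.mem_Ico] at h1
      rw [hf₀, Finset.mem_Icc]; omega
  have hv1 : l.count false < r := by
    rw [hl, List.count_replicate]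
    simp; omega
  have hv2 : l.count true < r := by
    rw [hl, List.count_replicate]
    simp; omega
  refine ⟨⟨hv1, hv2⟩, by simp [Theta.Tset], f₀, hf₀T,
    by simp [Theta.Tset], ?_, ?_⟩
  · -- witness property
    intro g hg hgbar
    have hbar : setCond g 1 (l.map not) = false := by
      by_contra hcon
      exact hgbar (mem_Tset_seq.2 ⟨hg, by revert hcon; cases setCond g 1 (l.map not) <;> simp⟩)
    obtain ⟨i, hi, hig, hcond⟩ := (setCond_false_iff g (l.map not) 1).1 hbar
    rw [andP_map_not, horP, List.length_map, hlen] at hi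
    rw [orP_map_not, handP] at hcond
    have hir : i = r := by
      rcases hi with h | h
      · simp at h
      · omega
    refine ⟨f₀, Finset.mem_insert_self _ _, ?_⟩
    intro x hx
    rw [hf₀, Finset.mem_Icc] at hx
    rcases Nat.lt_or_ge x r with hxr | hxr
    · exact hcond x (Finset.mem_Ico.2 ⟨hx.1, hxr⟩) (by omega)
    · have : x = r := by omega
      rwa [this, ← hir]
  · -- lex-down property
    intro f hf e' he' hlex
    simp only [Theta.Tset, Finset.mem_insert, Finset.notMem_empty, or_false] at hf
    subst hf
    obtain ⟨d, hd, hdf, hlexd⟩ := hlex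
    have hd1 : 1 ≤ d := (mem_ground.1 ((mem_ps.1 he').1 hd)).1
    have hdr : r < d := by
      by_contra hcon
      exact hdf (Finset.mem_Icc.2 ⟨hd1, by omega⟩)
    have : e' = f₀ := by
      refine eq_of_subset_ps he' hf₀c (fun c hc => ?_)
      by_contra hce
      have := hlexd c hc hce
      rw [hf₀, Finset.mem_Icc] at hc
      omega
    simp [this]

/-- Case (d) : `[∨]^(r-1) → ω` -/
lemma step_omega {n r : ℕ} (hr : 1 ≤ r) (hn : 2 * r ≤ n) :
    Good n r (.seq (List.replicate (r-1) true)) .omega := by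
  set l : List Bool := List.replicate (r-1) true with hl
  have hlen : l.length = r - 1 := List.length_replicate
  have horP : orP 1 l = Finset.Ico 1 r := by
    rw [hl, orP_replicate_true]; congr 1; omega
  have handP : andP 1 l = ∅ := andP_replicate_true _ _
  set f₀ : Finset ℕ := Finset.Icc (r+1) (2*r) with hf₀
  have hf₀g : f₀ ⊆ ground n := by
    intro x hx; rw [Finset.mem_Icc] at hx; exact mem_ground.2 ⟨by omega, by omega⟩
  have hf₀c : f₀.card = r := by rw [hf₀, card_Icc_nat]; omega
  have hf₀ps : f₀ ∈ Finset.powersetCard r (ground n) := mem_ps.2 ⟨hf₀g, hf₀c⟩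
  have hf₀nT : f₀ ∉ Theta.Tset n r (.seq l) := by
    refine not_mem_Tset_of_false (UNSATintro (i := r) (Or.inr (by omega)) ?_ ?_)
    · rw [hf₀, Finset.mem_Icc]; omega
    · intro i' h1 _
      rw [horP, Finset.mem_Ico] at h1
      rw [hf₀, Finset.mem_Icc]; omega
  have hcover : ∀ g ∈ Finset.powersetCard r (ground n),
      ∃ f ∈ insert f₀ (Theta.Tset n r (.seq l)), ∀ x ∈ f, x ∉ g := by
    intro g hg
    by_cases hy : ∃ y ∈ Finset.Icc 1 r, y ∉ g
    · obtain ⟨y, hy1, hy2⟩ := hy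
      rw [Finset.mem_Icc] at hy1
      obtain ⟨f, hf1, hf2, hf3⟩ := pad_exists hn hg
        (show ({y} : Finset ℕ) ⊆ ground n by
          intro x hx; rw [Finset.mem_singleton] at hx; subst hx
          exact mem_ground.2 ⟨hy1.1, by omega⟩)
        (by intro x hx; rw [Finset.mem_singleton] at hx; subst hx; exact hy2)
        (by simp; omega)
      refine ⟨f, Finset.mem_insert_of_mem (mem_Tset_seq.2 ⟨hf1, ?_⟩), hf3⟩
      refine SATintro (i := y) ?_ (hf2 (Finset.mem_singleton_self _)) ?_
      · rcases Nat.lt_or_ge y r with h' | h'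
        · exact Or.inl (by rw [horP, Finset.mem_Ico]; omega)
        · exact Or.inr (by omega)
      · intro i' h1 _
        rw [handP] at h1
        exact absurd h1 (Finset.notMem_empty _)
    · push_neg at hy
      have hgeq : g = Finset.Icc 1 r := by
        refine (Finset.eq_of_subset_of_card_le hy ?_).symm
        rw [(mem_ps.1 hg).2, card_Icc_nat]; omega
      refine ⟨f₀, Finset.mem_insert_self _ _, ?_⟩
      intro x hx
      rw [hf₀, Finset.mem_Icc] at hx
      rw [hgeq, Finset.mem_Icc]
      omega
  refine ⟨trivial, by rw [Theta.Tset]; exact Finset.filter_subset _ _, f₀,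
    by rw [Theta.Tset]; exact hf₀ps, hf₀nT, fun g hg _ => hcover g hg, ?_⟩
  -- lex-down property
  intro f hf e' he' hlex
  rcases Finset.mem_insert.1 hf with rfl | hfT
  · obtain ⟨d, hd, hdf, hlexd⟩ := hlex
    have hd1 : 1 ≤ d := (mem_ground.1 ((mem_ps.1 he').1 hd)).1
    have hsub : ∀ c ∈ f₀, c < d → c ∈ e' := by
      intro c hc hcd
      by_contra hce
      exact absurd hcd (not_lt.2 (le_of_lt (hlexd c hc hce)))
    rcases Nat.lt_or_ge d (r+1) with hdr | hdr
    · -- success point at d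
      refine Finset.mem_insert_of_mem (mem_Tset_seq.2 ⟨he', SATintro (i := d) ?_ hd ?_⟩)
      · rcases Nat.lt_or_ge d r with h' | h'
        · exact Or.inl (by rw [horP, Finset.mem_Ico]; omega)
        · exact Or.inr (by omega)
      · intro i' h1 _
        rw [handP] at h1
        exact absurd h1 (Finset.notMem_empty _)
    · have hd2r : 2*r < d := by
        by_contra hcon
        exact hdf (Finset.mem_Icc.2 ⟨by omega, by omega⟩)
      have : e' = f₀ := by
        refine eq_of_subset_ps he' hf₀c (fun c hc => ?_)
        refine hsub c hc ?_
        rw [hf₀, Finset.mem_Icc] at hc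
        omega
      rw [this]
      exact Finset.mem_insert_self _ _
  · exact Finset.mem_insert_of_mem (mem_Tset_seq.2 ⟨he',
      lexDown_setCond (mem_ps.1 he').1 (mem_Tset_seq.1 hfT).2 hlex⟩)

/-- Case (b) : `τ → τ ++ [∨] ++ [∧]^k` when `τ` has at most `r-2` symbols `∨`. -/
lemma step_seq_b {n r : ℕ} (hr : 1 ≤ r) (hn : 2 * r ≤ n) {τ : List Bool}
    (hv1 : τ.count false < r) (hv2 : τ.count true < r) (hb : τ.count true + 1 < r) :
    Good n r (.seq τ) (.seq (τ ++ true :: List.replicate (r - 1 - τ.count false) false)) := by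
  set k : ℕ := r - 1 - τ.count false with hk
  set m : ℕ := τ.length with hm
  set σl : List Bool := τ ++ true :: List.replicate k false with hσl
  have hcnt : τ.count false + τ.count true = m := count_add_count τ
  have hlen : σl.length = m + 1 + k := by
    rw [hσl]; simp; omega
  have handP : andP 1 σl = andP 1 τ ∪ Finset.Ico (m+2) (m+2+k) := by
    rw [hσl, andP_append]
    congr 1
    show andP (1 + m + 1) (List.replicate k false) = _
    rw [andP_replicate_false]
    congr 1 <;> omega
  have horP : orP 1 σl = orP 1 τ ∪ {m+1} := by
    rw [hσl, orP_append]
    congr 1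
    show insert (1 + m) (orP (1 + m + 1) (List.replicate k false)) = _
    rw [orP_replicate_false]
    have : 1 + m = m + 1 := by omega
    rw [this]
    rfl
  have hcFσ : σl.count false = r - 1 := by
    rw [hσl]; simp [List.count_append, List.count_cons, List.count_replicate]; omega
  have hmemandPτ : ∀ x ∈ andP 1 τ, 1 ≤ x ∧ x ≤ m := by
    intro x hx; have := mem_andP hx; omega
  have hmemorPτ : ∀ x ∈ orP 1 τ, 1 ≤ x ∧ x ≤ m := by
    intro x hx; have := mem_orP hx; omega
  have hbound : m + k + 2 ≤ 2*r - 1 := by omega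
  set f₀ : Finset ℕ := andP 1 τ ∪ Finset.Icc (m+2) (m+k+2) with hf₀
  have hf₀g : f₀ ⊆ ground n := by
    intro x hx
    rw [hf₀, Finset.mem_union] at hx
    rcases hx with hx | hx
    · have := hmemandPτ x hx; exact mem_ground.2 ⟨this.1, by omega⟩
    · rw [Finset.mem_Icc] at hx; exact mem_ground.2 ⟨by omega, by omega⟩
  have hdisjf₀ : Disjoint (andP 1 τ) (Finset.Icc (m+2) (m+k+2)) := by
    rw [Finset.disjoint_left]
    intro x hx hx2
    have := hmemandPτ x hx
    rw [Finset.mem_Icc] at hx2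
    omega
  have hf₀c : f₀.card = r := by
    rw [hf₀, Finset.card_union_of_disjoint hdisjf₀, card_andP, card_Icc_nat]
    omega
  have hf₀ps : f₀ ∈ Finset.powersetCard r (ground n) := mem_ps.2 ⟨hf₀g, hf₀c⟩
  have handPsub : andP 1 σl ⊆ f₀ := by
    rw [handP, hf₀]
    intro x hx
    rw [Finset.mem_union] at hx ⊢
    rcases hx with hx | hx
    · exact Or.inl hx
    · rw [Finset.mem_Ico] at hx; exact Or.inr (Finset.mem_Icc.2 ⟨hx.1, by omega⟩)
  have hf₀T : f₀ ∈ Theta.Tset n r (.seq σl) := by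
    refine mem_Tset_seq.2 ⟨hf₀ps, SATintro (i := m+k+2) (Or.inr (by omega)) ?_ ?_⟩
    · rw [hf₀, Finset.mem_union, Finset.mem_Icc]
      exact Or.inr ⟨by omega, le_refl _⟩
    · intro i' h1 _
      exact handPsub h1
  have hf₀nT : f₀ ∉ Theta.Tset n r (.seq τ) := by
    refine not_mem_Tset_of_false (UNSATintro (i := m+1) (Or.inr (by omega)) ?_ ?_)
    · rw [hf₀, Finset.mem_union, Finset.mem_Icc]
      push_neg
      refine ⟨fun h => by have := hmemandPτ _ h; omega, fun h => by omega⟩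
    · intro i' h1 _
      rw [hf₀, Finset.mem_union, Finset.mem_Icc]
      push_neg
      have hio := hmemorPτ _ h1
      refine ⟨fun h => ?_, fun h => by omega⟩
      exact absurd h1 (Finset.disjoint_left.1 (disjoint_andP_orP 1 τ) h)
  have hTsub : Theta.Tset n r (.seq τ) ⊆ Theta.Tset n r (.seq σl) := by
    intro e he
    obtain ⟨h1, h2⟩ := mem_Tset_seq.1 he
    exact mem_Tset_seq.2 ⟨h1, setCond_append_true h2⟩
  -- singleton property: the only element of T(σl) \ T(τ) is f₀
  have hsingle : ∀ e ∈ Theta.Tset n r (.seq σl), e ∉ Theta.Tset n r (.seq τ) → e = f₀ := by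
    intro e heσ heτ
    obtain ⟨heps, hesat⟩ := mem_Tset_seq.1 heσ
    obtain ⟨i, hi, hie, hci⟩ := (setCond_true_iff e σl 1).1 hesat
    obtain ⟨i2, hi2, hi2e, hci2⟩ :=
      (setCond_false_iff e τ 1).1 (setCond_false_of_not_mem heps heτ)
    rw [horP, Finset.mem_union, Finset.mem_singleton, hlen] at hi
    have hieq : i = m + k + 2 := by
      rcases hi with (hio | rfl) | h
      · -- i ∈ orP 1 τ : impossible
        exfalso
        have him := hmemorPτ _ hio
        rcases hi2 with hi2a | rfl
        · have hi2m := hmemandPτ _ hi2a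
          rcases lt_trichotomy i i2 with h' | h' | h'
          · exact hci2 i hio h' hie
          · exact Finset.disjoint_left.1 (disjoint_andP_orP 1 τ) (h' ▸ hi2a) hio
          · exact hi2e (hci i2 (handP ▸ Finset.mem_union_left _ hi2a) h')
        · exact hci2 i hio (by omega) hie
      · -- i = m + 1 : impossible
        exfalso
        rcases hi2 with hi2a | hi2b
        · have hi2m := hmemandPτ _ hi2a
          exact hi2e (hci i2 (handP ▸ Finset.mem_union_left _ hi2a) (by omega))
        · exact hi2e (by rw [hi2b, show 1 + τ.length = m + 1 from by omega]; exact hie)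
      · omega
    refine eq_of_subset_ps heps hf₀c ?_
    rw [hf₀]
    intro x hx
    rw [Finset.mem_union] at hx
    rcases hx with hx | hx
    · have := hmemandPτ _ hx
      exact hci x (handP ▸ Finset.mem_union_left _ hx) (by omega)
    · rw [Finset.mem_Icc] at hx
      rcases Nat.lt_or_ge x (m+k+2) with h' | h'
      · exact hci x (handP ▸ Finset.mem_union_right _ (Finset.mem_Ico.2 ⟨hx.1, by omega⟩))
          (by omega)
      · have : x = m + k + 2 := by omega
        rwa [this, ← hieq]
  refine ⟨⟨by omega, by rw [hσl]; simp [List.count_append, List.count_cons,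
      List.count_replicate]; omega⟩, hTsub, f₀, hf₀T, hf₀nT, ?_, ?_⟩
  · -- witness property
    intro g hg hgbar
    have hbar : setCond g 1 (σl.map not) = false := setCond_false_of_not_mem hg hgbar
    obtain ⟨i, hi, hig, hcond⟩ := (setCond_false_iff g (σl.map not) 1).1 hbar
    rw [andP_map_not, List.length_map, hlen] at hi
    rw [orP_map_not] at hcond
    set core : Finset ℕ := insert i ((andP 1 σl).filter (· < i)) with hcore
    have hixbound : 1 ≤ i ∧ i ≤ m + k + 2 := by
      rcases hi with h | h
      · have := mem_orP h; omega
      · omega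
    have hcoreg : ∀ x ∈ core, x ∉ g := by
      intro x hx
      rw [hcore, Finset.mem_insert] at hx
      rcases hx with rfl | hx
      · exact hig
      · rw [Finset.mem_filter] at hx
        exact hcond x hx.1 hx.2
    have hcoresub : core ⊆ ground n := by
      intro x hx
      rw [hcore, Finset.mem_insert] at hx
      rcases hx with rfl | hx
      · exact mem_ground.2 ⟨hixbound.1, by omega⟩
      · rw [Finset.mem_filter] at hx
        have := mem_andP hx.1
        rw [hlen] at this
        exact mem_ground.2 ⟨by omega, by omega⟩
    have hcorecard : core.card ≤ r := by
      calc core.card ≤ ((andP 1 σl).filter (· < i)).card + 1 := Finset.card_insert_le _ _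
        _ ≤ (andP 1 σl).card + 1 := by
            have := Finset.card_filter_le (andP 1 σl) (· < i)
            omega
        _ ≤ r := by rw [card_andP, hcFσ]; omega
    obtain ⟨f, hfps, hfsub, hfdisj⟩ := pad_exists hn hg hcoresub hcoreg hcorecard
    have hfT : f ∈ Theta.Tset n r (.seq σl) := by
      refine mem_Tset_seq.2 ⟨hfps, SATintro (i := i) ?_
        (hfsub (Finset.mem_insert_self _ _)) ?_⟩
      · rcases hi with h | h
        · exact Or.inl h
        · exact Or.inr (by omega)
      · intro i' h1 h2
        exact hfsub (Finset.mem_insert_of_mem (Finset.mem_filter.2 ⟨h1, h2⟩))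
    by_cases hfτ : f ∈ Theta.Tset n r (.seq τ)
    · exact ⟨f, Finset.mem_insert_of_mem hfτ, hfdisj⟩
    · have := hsingle f hfT hfτ
      exact ⟨f, by rw [this]; exact Finset.mem_insert_self _ _, hfdisj⟩
  · -- lex-down property
    intro f hf e' he' hlex
    rcases Finset.mem_insert.1 hf with rfl | hfT
    · obtain ⟨d, hd, hdf, hlexd⟩ := hlex
      have hd1 : 1 ≤ d := (mem_ground.1 ((mem_ps.1 he').1 hd)).1
      have hsub : ∀ c ∈ f₀, c < d → c ∈ e' := by
        intro c hc hcd
        by_contra hce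
        exact absurd hcd (not_lt.2 (le_of_lt (hlexd c hc hce)))
      have hfand : ∀ x ∈ andP 1 τ, x ∈ f₀ := by
        intro x hx
        rw [hf₀]
        exact Finset.mem_union_left _ hx
      rcases Nat.lt_or_ge d (m+1) with hdm | hdm
      · -- d ≤ m : success point of τ at d
        have hdor : d ∈ orP 1 τ := by
          rcases pos_cover (σ := τ) hd1 (by omega) with h' | h'
          · exact absurd hdf (by simp [hfand _ h'])
          · exact h'
        refine Finset.mem_insert_of_mem (mem_Tset_seq.2 ⟨he',
          SATintro (i := d) (Or.inl hdor) hd ?_⟩)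
        intro i' h1 h2
        exact hsub _ (hfand _ h1) h2
      rcases Nat.lt_or_ge d (m+2) with hdm1 | hdm2
      · -- d = m+1 : success at the last atom of τ
        have hdeq : d = m + 1 := by omega
        refine Finset.mem_insert_of_mem (mem_Tset_seq.2 ⟨he',
          SATintro (i := d) (Or.inr (by omega)) hd ?_⟩)
        intro i' h1 _
        have := hmemandPτ _ h1
        exact hsub _ (hfand _ h1) (by omega)
      rcases Nat.lt_or_ge (m+k+2) d with hdtop | hdmid
      · -- d beyond f₀ : then e' = f₀
        have : e' = f₀ := by
          refine eq_of_subset_ps he' hf₀c ?_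
          intro c hc
          refine hsub c hc ?_
          rw [hf₀, Finset.mem_union] at hc
          rcases hc with hc | hc
          · have := hmemandPτ _ hc; omega
          · rw [Finset.mem_Icc] at hc; omega
        rw [this]
        exact Finset.mem_insert_self _ _
      · -- m+2 ≤ d ≤ m+k+2 : contradiction, d ∈ f₀
        exfalso
        apply hdf
        rw [hf₀, Finset.mem_union, Finset.mem_Icc]
        exact Or.inr ⟨by omega, by omega⟩
    · exact Finset.mem_insert_of_mem (mem_Tset_seq.2 ⟨he',
        lexDown_setCond (mem_ps.1 he').1 (mem_Tset_seq.1 hfT).2 hlex⟩)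

lemma exists_decomp {τ : List Bool} (h : false ∈ τ) :
    ∃ σl p, τ = σl ++ false :: List.replicate p true := by
  induction τ with
  | nil => simp at h
  | cons b t ih =>
    by_cases hft : false ∈ t
    · obtain ⟨σl, p, hdec⟩ := ih hft
      exact ⟨b :: σl, p, by rw [hdec]; rfl⟩
    · have hb : b = false := by
        rcases List.mem_cons.1 h with h' | h'
        · exact h'.symm
        · exact absurd h' hft
      have ht : t = List.replicate t.length true := by
        rw [List.eq_replicate_length]
        intro x hx
        cases x
        · exact absurd hx hft
        · rfl
      exact ⟨[], t.length, by rw [hb]; simpa using ht⟩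

/-- Case (c) : `τ = σl ++ [∧] ++ [∨]^p → σl` when `τ` has `r-1` symbols `∨`. -/
lemma step_seq_c {n r : ℕ} (hr : 1 ≤ r) (hn : 2 * r ≤ n) {σl : List Bool} {p : ℕ}
    (hvF : σl.count false + 1 < r) (hvT : σl.count true + p = r - 1) :
    Good n r (.seq (σl ++ false :: List.replicate p true)) (.seq σl) := by
  set m : ℕ := σl.length with hm
  set τ : List Bool := σl ++ false :: List.replicate p true with hτ
  have hcnt : σl.count false + σl.count true = m := count_add_count σl
  have hlenτ : τ.length = m + 1 + p := by
    rw [hτ]; simp; omega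
  have handPτ : andP 1 τ = andP 1 σl ∪ {m+1} := by
    rw [hτ, andP_append]
    congr 1
    show insert (1 + m) (andP (1 + m + 1) (List.replicate p true)) = _
    rw [andP_replicate_true]
    have : 1 + m = m + 1 := by omega
    rw [this]
    rfl
  have horPτ : orP 1 τ = orP 1 σl ∪ Finset.Ico (m+2) (m+2+p) := by
    rw [hτ, orP_append]
    congr 1
    show orP (1 + m + 1) (List.replicate p true) = _
    rw [orP_replicate_true]
    congr 1 <;> omega
  have hmemandP : ∀ x ∈ andP 1 σl, 1 ≤ x ∧ x ≤ m := by
    intro x hx; have := mem_andP hx; omega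
  have hmemorP : ∀ x ∈ orP 1 σl, 1 ≤ x ∧ x ≤ m := by
    intro x hx; have := mem_orP hx; omega
  have hmbound : m + p + 2 ≤ 2*r - 1 := by omega
  set P : Finset ℕ := Finset.Icc (m+p+3) (2*r) with hP
  have hPcard : P.card = r - 1 - σl.count false := by
    rw [hP, card_Icc_nat]; omega
  set f₀ : Finset ℕ := insert (m+1) (andP 1 σl) ∪ P with hf₀
  have hm1notin : (m+1) ∉ andP 1 σl := fun h => by have := hmemandP _ h; omega
  have hdisj2 : Disjoint (insert (m+1) (andP 1 σl)) P := by
    rw [Finset.disjoint_left]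
    intro x hx hx2
    rw [hP, Finset.mem_Icc] at hx2
    rcases Finset.mem_insert.1 hx with rfl | hx
    · omega
    · have := hmemandP _ hx; omega
  have hf₀c : f₀.card = r := by
    rw [hf₀, Finset.card_union_of_disjoint hdisj2, Finset.card_insert_of_notMem hm1notin,
      card_andP, hPcard]
    omega
  have hf₀g : f₀ ⊆ ground n := by
    intro x hx
    rw [hf₀, Finset.mem_union] at hx
    rcases hx with hx | hx
    · rcases Finset.mem_insert.1 hx with rfl | hx
      · exact mem_ground.2 ⟨by omega, by omega⟩
      · have := hmemandP _ hx; exact mem_ground.2 ⟨this.1, by omega⟩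
    · rw [hP, Finset.mem_Icc] at hx; exact mem_ground.2 ⟨by omega, by omega⟩
  have hf₀ps : f₀ ∈ Finset.powersetCard r (ground n) := mem_ps.2 ⟨hf₀g, hf₀c⟩
  have hf₀mem : ∀ x, x ∈ f₀ ↔ (x = m+1 ∨ x ∈ andP 1 σl ∨ (m+p+3 ≤ x ∧ x ≤ 2*r)) := by
    intro x
    rw [hf₀, Finset.mem_union, Finset.mem_insert, hP, Finset.mem_Icc]
    tauto
  have hf₀T : f₀ ∈ Theta.Tset n r (.seq σl) := by
    refine mem_Tset_seq.2 ⟨hf₀ps, SATintro (i := m+1) (Or.inr (by omega)) ?_ ?_⟩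
    · rw [hf₀mem]; exact Or.inl rfl
    · intro i' h1 _
      rw [hf₀mem]; exact Or.inr (Or.inl h1)
  have hf₀nT : f₀ ∉ Theta.Tset n r (.seq τ) := by
    refine not_mem_Tset_of_false (UNSATintro (i := m+p+2) (Or.inr (by omega)) ?_ ?_)
    · rw [hf₀mem]
      push_neg
      refine ⟨by omega, fun h => by have := hmemandP _ h; omega, by omega⟩
    · intro i' h1 _
      rw [horPτ, Finset.mem_union] at h1
      rw [hf₀mem]
      push_neg
      rcases h1 with h1 | h1
      · have h2 := hmemorP _ h1
        refine ⟨by omega, fun h => ?_, by omega⟩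
        exact Finset.disjoint_left.1 (disjoint_andP_orP 1 σl) h h1
      · rw [Finset.mem_Ico] at h1
        exact ⟨by omega, fun h => by have := hmemandP _ h; omega, by omega⟩
  have hTsub : Theta.Tset n r (.seq τ) ⊆ Theta.Tset n r (.seq σl) := by
    intro e he
    obtain ⟨h1, h2⟩ := mem_Tset_seq.1 he
    exact mem_Tset_seq.2 ⟨h1, setCond_drop_false h2⟩
  have hvalid : (Theta.seq σl).valid r := ⟨by omega, by omega⟩
  refine ⟨hvalid, hTsub, f₀, hf₀T, hf₀nT, ?_, ?_⟩
  · -- witness property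
    intro g hg hgbar
    obtain ⟨hgsub, hgcard⟩ := mem_ps.1 hg
    have hbar : setCond g 1 (σl.map not) = false := setCond_false_of_not_mem hg hgbar
    obtain ⟨i, hi, hig, hA⟩ := (setCond_false_iff g (σl.map not) 1).1 hbar
    rw [andP_map_not, List.length_map] at hi
    rw [orP_map_not] at hA
    -- helper: construct a witness from a good ∨-position of σl
    have mkA : ∀ y, y ∈ orP 1 σl → y ∉ g → (∀ i' ∈ andP 1 σl, i' < y → i' ∉ g) →
        ∃ f ∈ insert f₀ (Theta.Tset n r (.seq τ)), ∀ x ∈ f, x ∉ g := by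
      intro y hy hyg hycond
      have hym := hmemorP _ hy
      set core : Finset ℕ := insert y ((andP 1 σl).filter (· < y)) with hcore
      have hcoreg : ∀ x ∈ core, x ∉ g := by
        intro x hx
        rcases Finset.mem_insert.1 hx with rfl | hx
        · exact hyg
        · rw [Finset.mem_filter] at hx
          exact hycond x hx.1 hx.2
      have hcoresub : core ⊆ ground n := by
        intro x hx
        rcases Finset.mem_insert.1 hx with rfl | hx
        · exact mem_ground.2 ⟨hym.1, by omega⟩
        · rw [Finset.mem_filter] at hx
          have := hmemandP _ hx.1
          exact mem_ground.2 ⟨this.1, by omega⟩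
      have hcorecard : core.card ≤ r := by
        calc core.card ≤ ((andP 1 σl).filter (· < y)).card + 1 := Finset.card_insert_le _ _
          _ ≤ (andP 1 σl).card + 1 := by
              have := Finset.card_filter_le (andP 1 σl) (· < y)
              omega
          _ ≤ r := by rw [card_andP]; omega
      obtain ⟨f, hfps, hfsub, hfdisj⟩ := pad_exists hn hg hcoresub hcoreg hcorecard
      refine ⟨f, Finset.mem_insert_of_mem (mem_Tset_seq.2 ⟨hfps, SATintro (i := y)
        (Or.inl (horPτ ▸ Finset.mem_union_left _ hy)) (hfsub (Finset.mem_insert_self _ _))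
        ?_⟩), hfdisj⟩
      intro i' h1 h2
      rw [handPτ, Finset.mem_union, Finset.mem_singleton] at h1
      rcases h1 with h1 | rfl
      · exact hfsub (Finset.mem_insert_of_mem (Finset.mem_filter.2 ⟨h1, h2⟩))
      · omega
    rcases hi with hio | him
    · exact mkA i hio hig hA
    · -- failure point at the last atom of σl
      have hAg : ∀ i' ∈ andP 1 σl, i' ∉ g := by
        intro i' h1
        exact hA i' h1 (by have := hmemandP _ h1; omega)
      by_cases hy2 : ∃ y ∈ orP 1 σl, y ∉ g
      · obtain ⟨y, hy, hyg⟩ := hy2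
        exact mkA y hy hyg (fun i' h1 _ => hAg i' h1)
      · push_neg at hy2
        by_cases hblock : ∃ x ∈ Finset.Icc (m+2) (m+p+2), x ∉ g
        · obtain ⟨x, hx, hxg⟩ := hblock
          rw [Finset.mem_Icc] at hx
          set core : Finset ℕ := insert x (insert (m+1) (andP 1 σl)) with hcore
          have hcoreg : ∀ z ∈ core, z ∉ g := by
            intro z hz
            rcases Finset.mem_insert.1 hz with rfl | hz
            · exact hxg
            rcases Finset.mem_insert.1 hz with rfl | hz
            · exact (by omega : m + 1 = i) ▸ hig
            · exact hAg z hz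
          have hcoresub : core ⊆ ground n := by
            intro z hz
            rcases Finset.mem_insert.1 hz with rfl | hz
            · exact mem_ground.2 ⟨by omega, by omega⟩
            rcases Finset.mem_insert.1 hz with rfl | hz
            · exact mem_ground.2 ⟨by omega, by omega⟩
            · have := hmemandP _ hz; exact mem_ground.2 ⟨this.1, by omega⟩
          have hcorecard : core.card ≤ r := by
            calc core.card ≤ (insert (m+1) (andP 1 σl)).card + 1 := Finset.card_insert_le _ _
              _ = (andP 1 σl).card + 2 := by rw [Finset.card_insert_of_notMem hm1notin]
              _ ≤ r := by rw [card_andP]; omega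
          obtain ⟨f, hfps, hfsub, hfdisj⟩ := pad_exists hn hg hcoresub hcoreg hcorecard
          refine ⟨f, Finset.mem_insert_of_mem (mem_Tset_seq.2 ⟨hfps, SATintro (i := x)
            ?_ (hfsub (Finset.mem_insert_self _ _)) ?_⟩), hfdisj⟩
          · rcases Nat.lt_or_ge x (m+p+2) with h' | h'
            · exact Or.inl (horPτ ▸ Finset.mem_union_right _ (Finset.mem_Ico.2 ⟨hx.1, by omega⟩))
            · exact Or.inr (by omega)
          · intro i' h1 _
            rw [handPτ, Finset.mem_union, Finset.mem_singleton] at h1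
            rcases h1 with h1 | rfl
            · exact hfsub (Finset.mem_insert_of_mem (Finset.mem_insert_of_mem h1))
            · exact hfsub (Finset.mem_insert_of_mem (Finset.mem_insert_self _ _))
        · -- g is exactly orP σl ∪ Icc (m+2) (m+p+2), and f₀ avoids it
          push_neg at hblock
          have hgeq : g = orP 1 σl ∪ Finset.Icc (m+2) (m+p+2) := by
            have hsub2 : orP 1 σl ∪ Finset.Icc (m+2) (m+p+2) ⊆ g := by
              intro x hx
              rcases Finset.mem_union.1 hx with hx | hx
              · exact hy2 x hx
              · exact hblock x hx
            refine (Finset.eq_of_subset_of_card_le hsub2 ?_).symm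
            rw [hgcard, Finset.card_union_of_disjoint, card_orP, card_Icc_nat]
            · omega
            · rw [Finset.disjoint_left]
              intro x hx hx2
              have := hmemorP _ hx
              rw [Finset.mem_Icc] at hx2
              omega
          refine ⟨f₀, Finset.mem_insert_self _ _, ?_⟩
          intro x hx
          rw [hf₀mem] at hx
          rw [hgeq, Finset.mem_union, Finset.mem_Icc]
          push_neg
          rcases hx with rfl | hx | hx
          · exact ⟨fun h => by have := hmemorP _ h; omega, by omega⟩
          · exact ⟨fun h => Finset.disjoint_left.1 (disjoint_andP_orP 1 σl) hx h, by
              have := hmemandP _ hx; omega⟩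
          · exact ⟨fun h => by have := hmemorP _ h; omega, by omega⟩
  · -- lex-down property
    intro f hf e' he' hlex
    rcases Finset.mem_insert.1 hf with rfl | hfT
    · obtain ⟨d, hd, hdf, hlexd⟩ := hlex
      have hd1 : 1 ≤ d := (mem_ground.1 ((mem_ps.1 he').1 hd)).1
      have hsub : ∀ c ∈ f₀, c < d → c ∈ e' := by
        intro c hc hcd
        by_contra hce
        exact absurd hcd (not_lt.2 (le_of_lt (hlexd c hc hce)))
      rcases Nat.lt_or_ge d (m+1) with hdm | hdm
      · -- d ≤ m : success point of τ at d
        have hdor : d ∈ orP 1 σl := by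
          rcases pos_cover (σ := σl) hd1 (by omega) with h' | h'
          · exact absurd (show d ∈ f₀ by rw [hf₀mem]; exact Or.inr (Or.inl h')) hdf
          · exact h'
        refine Finset.mem_insert_of_mem (mem_Tset_seq.2 ⟨he',
          SATintro (i := d) (Or.inl (horPτ ▸ Finset.mem_union_left _ hdor)) hd ?_⟩)
        intro i' h1 h2
        rw [handPτ, Finset.mem_union, Finset.mem_singleton] at h1
        rcases h1 with h1 | rfl
        · exact hsub _ (by rw [hf₀mem]; exact Or.inr (Or.inl h1)) h2
        · omega
      rcases Nat.lt_or_ge d (m+2) with hdm1 | hdm2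
      · -- d = m+1 ∈ f₀ : contradiction
        exact absurd (by rw [hf₀mem]; exact Or.inl (by omega)) hdf
      rcases Nat.lt_or_ge (m+p+2) d with hdbig | hdmid
      · rcases Nat.lt_or_ge (2*r) d with hdtop | hdP
        · -- d beyond f₀ : e' = f₀
          have : e' = f₀ := by
            refine eq_of_subset_ps he' hf₀c ?_
            intro c hc
            refine hsub c hc ?_
            rw [hf₀mem] at hc
            rcases hc with rfl | hc | hc
            · omega
            · have := hmemandP _ hc; omega
            · omega
          rw [this]
          exact Finset.mem_insert_self _ _
        · -- m+p+3 ≤ d ≤ 2r : d ∈ P ⊆ f₀, contradiction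
          exact absurd (by rw [hf₀mem]; exact Or.inr (Or.inr ⟨by omega, hdP⟩)) hdf
      · -- m+2 ≤ d ≤ m+p+2 : success point of τ at d
        refine Finset.mem_insert_of_mem (mem_Tset_seq.2 ⟨he', SATintro (i := d) ?_ hd ?_⟩)
        · rcases Nat.lt_or_ge d (m+p+2) with h' | h'
          · exact Or.inl (horPτ ▸ Finset.mem_union_right _ (Finset.mem_Ico.2 ⟨hdm2, by omega⟩))
          · exact Or.inr (by omega)
        · intro i' h1 _
          rw [handPτ, Finset.mem_union, Finset.mem_singleton] at h1
          rcases h1 with h1 | rfl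
          · exact hsub _ (by rw [hf₀mem]; exact Or.inr (Or.inl h1))
              (by have := hmemandP _ h1; omega)
          · exact hsub _ (by rw [hf₀mem]; exact Or.inl rfl) (by omega)
    · exact Finset.mem_insert_of_mem (mem_Tset_seq.2 ⟨he',
        lexDown_setCond (mem_ps.1 he').1 (mem_Tset_seq.1 hfT).2 hlex⟩)

/-- every valid non-maximal element of `Θ_r` has a good successor -/
lemma step_exists {n r : ℕ} (hr : 1 ≤ r) (hn : 2 * r ≤ n) (θ : Theta) (hv : θ.valid r)
    (hθ : θ ≠ .omega) : ∃ σ : Theta, Good n r θ σ := by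
  cases θ with
  | alpha => exact ⟨_, step_alpha hr hn⟩
  | omega => exact absurd rfl hθ
  | seq τ =>
    obtain ⟨hv1, hv2⟩ := hv
    by_cases hb : τ.count true + 1 < r
    · exact ⟨_, step_seq_b hr hn hv1 hv2 hb⟩
    · have hcT : τ.count true = r - 1 := by omega
      by_cases hfmem : false ∈ τ
      · obtain ⟨σl, p, rfl⟩ := exists_decomp hfmem
        have hcF : σl.count false + 1 < r := by
          rw [List.count_append, List.count_cons] at hv1
          simp [List.count_replicate] at hv1
          omega
        have hcT2 : σl.count true + p = r - 1 := by
          rw [List.count_append, List.count_cons] at hcT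
          simp [List.count_replicate] at hcT
          omega
        exact ⟨_, step_seq_c hr hn hcF hcT2⟩
      · have hcf0 : τ.count false = 0 := List.count_eq_zero.2 hfmem
        have hτ : τ = List.replicate (r-1) true := by
          have hlen : τ.length = r - 1 := by
            have := count_add_count τ
            omega
          rw [← hlen, List.eq_replicate_length]
          intro x hx
          cases x
          · exact absurd hx hfmem
          · rfl
        rw [hτ]
        exact ⟨_, step_omega hr hn⟩

open scoped FinsetFamily

/-- reversal map into `Fin n` -/
def revFin (n : ℕ) (e : Finset ℕ) : Finset (Fin n) :=
  Finset.univ.filter (fun x => n - (x : ℕ) ∈ e)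

/-- inverse of the reversal map -/
def pullN (n : ℕ) (s : Finset (Fin n)) : Finset ℕ := s.image (fun x : Fin n => n - (x : ℕ))

lemma mem_revFin {n : ℕ} {e : Finset ℕ} {x : Fin n} : x ∈ revFin n e ↔ n - (x : ℕ) ∈ e := by
  simp [revFin]

lemma mem_pullN {n : ℕ} {s : Finset (Fin n)} {a : ℕ} :
    a ∈ pullN n s ↔ ∃ x ∈ s, n - (x : ℕ) = a := by
  simp [pullN]

lemma pullN_subset_ground {n : ℕ} (s : Finset (Fin n)) : pullN n s ⊆ ground n := by
  intro a ha
  obtain ⟨x, -, rfl⟩ := mem_pullN.1 ha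
  have := x.isLt
  exact mem_ground.2 ⟨by omega, by omega⟩

lemma pullN_revFin {n : ℕ} {e : Finset ℕ} (he : e ⊆ ground n) : pullN n (revFin n e) = e := by
  ext a
  rw [mem_pullN]
  constructor
  · rintro ⟨x, hx, rfl⟩
    exact mem_revFin.1 hx
  · intro ha
    have hag := mem_ground.1 (he ha)
    refine ⟨⟨n - a, by omega⟩, mem_revFin.2 ?_, ?_⟩
    · simpa [Nat.sub_sub_self hag.2] using ha
    · simp [Nat.sub_sub_self hag.2]

lemma revFin_pullN {n : ℕ} (s : Finset (Fin n)) : revFin n (pullN n s) = s := by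
  ext x
  rw [mem_revFin, mem_pullN]
  constructor
  · rintro ⟨y, hy, hxy⟩
    have hx := x.isLt
    have hy2 := y.isLt
    have : y = x := Fin.ext (by omega)
    rwa [← this]
  · intro hx
    exact ⟨x, hx, rfl⟩

lemma card_pullN {n : ℕ} (s : Finset (Fin n)) : (pullN n s).card = s.card := by
  rw [pullN]
  apply Finset.card_image_of_injOn
  intro x _ y _ hxy
  simp only at hxy
  have := x.isLt
  have := y.isLt
  exact Fin.ext (by omega)

lemma card_revFin {n : ℕ} {e : Finset ℕ} (he : e ⊆ ground n) : (revFin n e).card = e.card := by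
  conv_rhs => rw [← pullN_revFin he]
  rw [card_pullN]

lemma revFin_injOn {n : ℕ} {e e' : Finset ℕ} (he : e ⊆ ground n) (he' : e' ⊆ ground n)
    (h : revFin n e = revFin n e') : e = e' := by
  rw [← pullN_revFin he, ← pullN_revFin he', h]

set_option maxHeartbeats 1600000 in
attribute [-instance] instDecidableEqFin in
/-- The generic Kruskal-Katona upper bound on blockers. -/
lemma blocker_upper_bound {n r : ℕ} (hr : 1 ≤ r) (hn : 2 * r ≤ n)
    (W Bs F : Finset (Finset ℕ))
    (hW : W ⊆ Finset.powersetCard r (ground n))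
    (hG5 : ∀ g ∈ Finset.powersetCard r (ground n), g ∉ Bs → ∃ f ∈ W, ∀ x ∈ f, x ∉ g)
    (hG6 : ∀ f ∈ W, ∀ e' ∈ Finset.powersetCard r (ground n), lexLt e' f → e' ∈ W)
    (hF : F ⊆ Finset.powersetCard r (ground n)) (hcard : W.card ≤ F.card) :
    (blockerT n r F).card ≤ Bs.card := by
  set ps : Finset (Finset ℕ) := Finset.powersetCard r (ground n) with hps
  set k : ℕ := n - 2 * r with hk
  set Ψ : Finset ℕ → Finset (Fin n) := fun f => (revFin n f)ᶜ with hΨ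
  have hΨcard : ∀ f ∈ ps, (Ψ f).card = n - r := by
    intro f hf
    obtain ⟨h1, h2⟩ := mem_ps.1 hf
    rw [hΨ]
    simp only [Finset.card_compl, Fintype.card_fin]
    rw [card_revFin h1, h2]
  have hΨinj : ∀ e ∈ ps, ∀ e' ∈ ps, Ψ e = Ψ e' → e = e' := by
    intro e he e' he' h
    rw [hΨ] at h
    simp only at h
    exact revFin_injOn (mem_ps.1 he).1 (mem_ps.1 he').1 (compl_inj_iff.1 h)
  -- membership in the iterated shadow
  have Hmem : ∀ (V : Finset (Finset ℕ)), V ⊆ ps → ∀ e ∈ ps, (∃ f ∈ V, ∀ x ∈ e, x ∉ f) →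
      revFin n e ∈ ∂ ^[k] (V.image Ψ) := by
    intro V hV e he ⟨f, hfV, hdisj⟩
    rw [Finset.mem_shadow_iterate_iff_exists_sdiff]
    refine ⟨Ψ f, Finset.mem_image_of_mem _ hfV, ?_, ?_⟩
    · intro x hx
      rw [hΨ]
      simp only [Finset.mem_compl, mem_revFin]
      exact hdisj _ (mem_revFin.1 hx)
    · have hsub : revFin n e ⊆ Ψ f := by
        intro x hx
        rw [hΨ]
        simp only [Finset.mem_compl, mem_revFin]
        exact hdisj _ (mem_revFin.1 hx)
      rw [Finset.card_sdiff_of_subset hsub, hΨcard f (hV hfV), card_revFin (mem_ps.1 he).1,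
        (mem_ps.1 he).2]
      omega
  have Hmem2 : ∀ (V : Finset (Finset ℕ)), V ⊆ ps → ∀ s ∈ ∂ ^[k] (V.image Ψ),
      ∃ e ∈ ps, (∃ f ∈ V, ∀ x ∈ e, x ∉ f) ∧ revFin n e = s := by
    intro V hV s hs
    rw [Finset.mem_shadow_iterate_iff_exists_sdiff] at hs
    obtain ⟨A, hA, hsub, hcard2⟩ := hs
    obtain ⟨f, hfV, rfl⟩ := Finset.mem_image.1 hA
    have hAcard : (Ψ f).card = n - r := hΨcard f (hV hfV)
    have hscard : s.card = r := by
      have h1 := Finset.card_sdiff_of_subset hsub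
      have h2 := Finset.card_le_card hsub
      omega
    refine ⟨pullN n s, mem_ps.2 ⟨pullN_subset_ground s, by rw [card_pullN, hscard]⟩,
      ⟨f, hfV, ?_⟩, revFin_pullN s⟩
    intro a ha
    obtain ⟨y, hy, rfl⟩ := mem_pullN.1 ha
    have := hsub hy
    rw [hΨ] at this
    simp only [Finset.mem_compl, mem_revFin] at this
    exact this
  -- counting
  set D : Finset (Finset ℕ) := ps.filter (fun e => ∃ f ∈ F, ∀ x ∈ e, x ∉ f) with hD
  have hcount : (blockerT n r F).card + D.card = ps.card := by
    rw [hD]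
    have : blockerT n r F = ps.filter (fun e => ¬∃ f ∈ F, ∀ x ∈ e, x ∉ f) := by
      ext e
      rw [blockerT, Finset.mem_filter, Finset.mem_filter]
      refine and_congr_right fun _ => ?_
      push_neg
      constructor
      · intro h f hf
        obtain ⟨x, hx⟩ := h f hf
        rw [Finset.mem_inter] at hx
        exact ⟨x, hx.1, hx.2⟩
      · intro h f hf
        obtain ⟨x, hx1, hx2⟩ := h f hf
        exact ⟨x, Finset.mem_inter.2 ⟨hx1, hx2⟩⟩
    rw [this]
    rw [add_comm]
    exact Finset.card_filter_add_card_filter_not _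
  -- the image families
  have h𝒜sized : ((F.image Ψ : Finset (Finset (Fin n))) : Set (Finset (Fin n))).Sized (n - r) := by
    intro A hA
    obtain ⟨f, hf, rfl⟩ := Finset.mem_image.1 (by exact_mod_cast hA)
    exact hΨcard f (hF hf)
  have h𝒜card : (F.image Ψ).card = F.card :=
    Finset.card_image_of_injOn (fun e he e' he' h => hΨinj e (hF he) e' (hF he') h)
  have h𝒞card : (W.image Ψ).card = W.card :=
    Finset.card_image_of_injOn (fun e he e' he' h => hΨinj e (hW he) e' (hW he') h)
  -- the image of W is an initial segment in colex
  have hInit : Finset.Colex.IsInitSeg (W.image Ψ) (n - r) := by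
    constructor
    · intro A hA
      obtain ⟨f, hf, rfl⟩ := Finset.mem_image.1 (by exact_mod_cast hA)
      exact hΨcard f (hW hf)
    · rintro A B hA ⟨hBA, hBcard⟩
      obtain ⟨f, hfW, rfl⟩ := Finset.mem_image.1 hA
      set e' : Finset ℕ := pullN n Bᶜ with he'
      have he'g : e' ⊆ ground n := pullN_subset_ground _
      have he'card : e'.card = r := by
        rw [he', card_pullN, Finset.card_compl, Fintype.card_fin, hBcard]
        omega
      have he'ps : e' ∈ ps := mem_ps.2 ⟨he'g, he'card⟩
      have hrevB : Ψ e' = B := by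
        rw [hΨ]
        show (revFin n e')ᶜ = B
        rw [he', revFin_pullN, compl_compl]
      -- extract the lexLt witness
      obtain ⟨a, haA, haB, hall⟩ := Finset.Colex.toColex_lt_toColex_iff_exists_forall_lt.1 hBA
      have haval := a.isLt
      have hd : n - (a : ℕ) ∈ e' := by
        rw [he', mem_pullN]
        exact ⟨a, Finset.mem_compl.2 haB, rfl⟩
      have hdf : n - (a : ℕ) ∉ f := by
        rw [hΨ] at haA
        simp only [Finset.mem_compl, mem_revFin] at haA
        exact haA
      have hlex : lexLt e' f := by
        refine ⟨n - (a : ℕ), hd, hdf, ?_⟩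
        intro c hc hce
        have hcg := mem_ground.1 ((mem_ps.1 (hW hfW)).1 hc)
        have hcb : (n : ℕ) - c < n := by omega
        have hbB : (⟨n - c, hcb⟩ : Fin n) ∈ B := by
          by_contra hbB
          apply hce
          rw [he', mem_pullN]
          exact ⟨⟨n - c, hcb⟩, Finset.mem_compl.2 hbB, by show n - (n - c) = c; omega⟩
        have hbA : (⟨n - c, hcb⟩ : Fin n) ∈ revFin n f := by
          rw [mem_revFin]
          show n - (n - c) ∈ f
          rw [Nat.sub_sub_self hcg.2]
          exact hc
        have hlt := hall _ hbB (by
          rw [hΨ]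
          simp only [Finset.mem_compl, not_not]
          exact hbA)
        rw [Fin.lt_def] at hlt
        have hlt2 : n - c < (a : ℕ) := hlt
        omega
      have := hG6 f hfW e' he'ps hlex
      rw [← hrevB]
      exact Finset.mem_image_of_mem _ this
  -- Kruskal-Katona
  have hKK : (∂ ^[k] (W.image Ψ)).card ≤ (∂ ^[k] (F.image Ψ)).card :=
    Finset.iterated_kk h𝒜sized (by rw [h𝒜card, h𝒞card]; exact hcard) hInit
  -- the iterated shadow of the image of F counts D
  have hshF : (∂ ^[k] (F.image Ψ)).card = D.card := by
    have himg : ∂ ^[k] (F.image Ψ) = D.image (revFin n) := by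
      ext s
      constructor
      · intro hs
        obtain ⟨e, heps, hex, hrev⟩ := Hmem2 F hF s hs
        exact Finset.mem_image.2 ⟨e, Finset.mem_filter.2 ⟨heps, hex⟩, hrev⟩
      · intro hs
        obtain ⟨e, he, rfl⟩ := Finset.mem_image.1 hs
        rw [hD, Finset.mem_filter] at he
        exact Hmem F hF e he.1 he.2
    rw [himg]
    apply Finset.card_image_of_injOn
    intro e he e' he' h
    simp only [hD, Finset.mem_coe, Finset.mem_filter] at he he'
    exact revFin_injOn (mem_ps.1 he.1).1 (mem_ps.1 he'.1).1 h
  -- the iterated shadow of the image of W covers everything outside Bs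
  have hshW : ps.card ≤ (∂ ^[k] (W.image Ψ)).card + Bs.card := by
    set D₀ : Finset (Finset ℕ) := ps.filter (fun e => e ∉ Bs) with hD₀
    have hsub : D₀.image (revFin n) ⊆ ∂ ^[k] (W.image Ψ) := by
      intro s hs
      obtain ⟨e, he, rfl⟩ := Finset.mem_image.1 hs
      rw [hD₀, Finset.mem_filter] at he
      obtain ⟨f, hfW2, hd⟩ := hG5 e he.1 he.2
      exact Hmem W hW e he.1 ⟨f, hfW2, fun x hx hxf => hd x hxf hx⟩
    have hD₀card : D₀.card ≤ (∂ ^[k] (W.image Ψ)).card := by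
      rw [← Finset.card_image_of_injOn (f := revFin n) (fun e he e' he' h =>
        revFin_injOn (mem_ps.1 (Finset.mem_filter.1 he).1).1
          (mem_ps.1 (Finset.mem_filter.1 he').1).1 h)]
      exact Finset.card_le_card hsub
    have hsplit : (ps.filter (fun e => e ∈ Bs)).card + D₀.card = ps.card :=
      Finset.card_filter_add_card_filter_not _
    have hBscard : (ps.filter (fun e => e ∈ Bs)).card ≤ Bs.card :=
      Finset.card_le_card (fun e he => (Finset.mem_filter.1 he).2)
    omega
  omega

/-- the chain lemma: for every `1 ≤ t ≤ C(n,r)` there is a good pair sandwiching `t` -/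
lemma chain_exists {n r : ℕ} (hr : 1 ≤ r) (hn : 2 * r ≤ n) :
    ∀ t, 1 ≤ t → t ≤ (Finset.powersetCard r (ground n)).card →
      ∃ τ σ : Theta, τ.valid r ∧ Good n r τ σ ∧
        (Theta.Tset n r τ).card < t ∧ t ≤ (Theta.Tset n r σ).card := by
  intro t
  induction t with
  | zero => omega
  | succ t ih =>
    intro _ hN
    rcases Nat.eq_zero_or_pos t with rfl | ht1
    · -- base case t+1 = 1
      have hG := step_alpha (n := n) hr hn
      obtain ⟨-, -, f₀, hf₀T, -, -, -⟩ := hG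
      exact ⟨.alpha, _, trivial, step_alpha hr hn, by simp [Theta.Tset],
        Finset.card_pos.2 ⟨f₀, hf₀T⟩⟩
    · obtain ⟨τ, σ, hτv, hG, h1, h2⟩ := ih ht1 (by omega)
      by_cases hle : t + 1 ≤ (Theta.Tset n r σ).card
      · exact ⟨τ, σ, hτv, hG, by omega, hle⟩
      · have hcard : (Theta.Tset n r σ).card = t := by omega
        have hσω : σ ≠ .omega := by
          intro h
          rw [h] at hcard
          have : Theta.Tset n r .omega = Finset.powersetCard r (ground n) := rfl
          rw [this] at hcard
          omega
        obtain ⟨σ', hG'⟩ := step_exists hr hn σ hG.1 hσω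
        have hparts := hG'
        obtain ⟨-, hsub', f₀', hf₀T', hf₀nT', -, -⟩ := hparts
        have hss : Theta.Tset n r σ ⊂ Theta.Tset n r σ' :=
          (Finset.ssubset_iff_of_subset hsub').2 ⟨f₀', hf₀T', hf₀nT'⟩
        have := Finset.card_lt_card hss
        exact ⟨σ, σ', hG.1, hG', by omega, by omega⟩


/-- For every `0 ≤ t ≤ C(n, r)` there is `0 ≤ i ≤ C(2r, r)` with `b(t) = M(i)`:
the maximal blocker size over `t`-element families of `r`-subsets of `[n]` is
`|T_r(σ)|` for some `σ ∈ Θ_r`. -/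
theorem stmt18 (r n t : ℕ) (hr : 1 ≤ r) (hn : 2 * r ≤ n) (ht : t ≤ Nat.choose n r) :
    ∃ σ : Theta, σ.valid r ∧
      IsGreatest {m : ℕ | ∃ F ⊆ Finset.powersetCard r (ground n),
        F.card = t ∧ (blockerT n r F).card = m} ((σ.Tset n r).card) := by
  have hpscard : (Finset.powersetCard r (ground n)).card = Nat.choose n r := by
    rw [Finset.card_powersetCard, card_ground]
  rcases Nat.eq_zero_or_pos t with rfl | ht1
  · -- t = 0 : take σ = ω
    refine ⟨.omega, trivial, ⟨∅, Finset.empty_subset _, Finset.card_empty, ?_⟩, ?_⟩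
    · have : blockerT n r ∅ = Finset.powersetCard r (ground n) := by
        rw [blockerT]
        exact Finset.filter_true_of_mem (fun e _ f hf => absurd hf (Finset.notMem_empty f))
      rw [this]
      rfl
    · rintro m ⟨F, hFsub, hFcard, rfl⟩
      exact Finset.card_le_card (Finset.filter_subset _ _)
  · -- t ≥ 1
    have hN : t ≤ (Finset.powersetCard r (ground n)).card := by omega
    obtain ⟨τ, σ, hτv, ⟨hσv, hsub, f₀, hf₀T, hf₀nT, hG5, hG6⟩, hlt, hle⟩ :=
      chain_exists hr hn t ht1 hN
    set W : Finset (Finset ℕ) := insert f₀ (Theta.Tset n r τ) with hWdef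
    have hWsub : W ⊆ Theta.Tset n r σ := by
      intro x hx
      rcases Finset.mem_insert.1 hx with rfl | hx
      · exact hf₀T
      · exact hsub hx
    have hWps : W ⊆ Finset.powersetCard r (ground n) :=
      fun x hx => Tset_subset_ps n r σ (hWsub hx)
    have hWcard : W.card = (Theta.Tset n r τ).card + 1 :=
      Finset.card_insert_of_notMem hf₀nT
    refine ⟨σ.bar, valid_bar hσv, ?_, ?_⟩
    · -- membership
      obtain ⟨F, hF1, hF2, hF3⟩ :=
        Finset.exists_subsuperset_card_eq hWsub (by omega) hle
      refine ⟨F, fun x hx => Tset_subset_ps n r σ (hF2 hx), hF3, ?_⟩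
      have hblock : blockerT n r F = Theta.Tset n r σ.bar := by
        ext g
        constructor
        · intro hg
          obtain ⟨hgps, hgall⟩ := Finset.mem_filter.1 hg
          by_contra hgn
          obtain ⟨f, hfW, hdisj⟩ := hG5 g hgps hgn
          obtain ⟨x, hx⟩ := hgall f (hF1 hfW)
          rw [Finset.mem_inter] at hx
          exact hdisj x hx.2 hx.1
        · intro hg
          refine Finset.mem_filter.2 ⟨Tset_subset_ps n r σ.bar hg, ?_⟩
          intro f hf
          rw [Finset.inter_comm]
          exact crossTheta σ (hF2 hf) hg
      rw [hblock]
    · -- upper bound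
      rintro m ⟨F, hFsub, hFcard, rfl⟩
      exact blocker_upper_bound hr hn W (Theta.Tset n r σ.bar) F hWps hG5 hG6 hFsub
        (by omega)
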